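/- arXiv:1812.08698 — 2 statements merged into one kernel-verified Lean document; each statement's English description precedes it below -/
import Mathlib

section
/- Any two distinct vectors of norm 4/5 in the dual lattice of A_4^∨(5) are inequivalent modulo A_4^∨: if a, b ∈ A_4 satisfy ⟨a,a⟩ = ⟨b,b⟩ = 4 and (a − b)/5 ∈ A_4^∨, then a = b. Consequently the vectors a/5 with a ∈ A_4, ⟨a,a⟩ = 4 represent exactly 30 distinct classes in D. -/
open scoped BigOperators

noncomputable section

/-- The standard bilinear form `⟨x,y⟩ = ∑ xᵢ yᵢ` on `ℚ^5`. -/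
def form (x y : Fin 5 → ℚ) : ℚ := ∑ i, x i * y i

/-- The root lattice `A₄ = {a ∈ ℤ^5 : a₁ + ⋯ + a₅ = 0}` inside `ℚ^5`. -/
def A4 : AddSubgroup (Fin 5 → ℚ) where
  carrier := {a | (∀ i, ∃ n : ℤ, a i = (n : ℚ)) ∧ ∑ i, a i = 0}
  zero_mem' := ⟨fun _ => ⟨0, by simp⟩, by simp⟩
  add_mem' := by
    rintro a b ⟨ha, ha0⟩ ⟨hb, hb0⟩
    constructor
    · intro i
      obtain ⟨n, hn⟩ := ha i
      obtain ⟨m, hm⟩ := hb i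
      exact ⟨n + m, by push_cast [Pi.add_apply, hn, hm]; ring⟩
    · simp [Pi.add_apply, Finset.sum_add_distrib, ha0, hb0]
  neg_mem' := by
    rintro a ⟨ha, ha0⟩
    constructor
    · intro i
      obtain ⟨n, hn⟩ := ha i
      exact ⟨-n, by push_cast [Pi.neg_apply, hn]; ring⟩
    · simp [Pi.neg_apply, Finset.sum_neg_distrib, ha0]

/-- The fundamental weight `w₁ = (4,-1,-1,-1,-1)/5` of `A₄`. -/
def w1 : Fin 5 → ℚ := ![4/5, -1/5, -1/5, -1/5, -1/5]
/-- The fundamental weight `w₂ = (3,3,-2,-2,-2)/5` of `A₄`. -/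
def w2 : Fin 5 → ℚ := ![3/5, 3/5, -2/5, -2/5, -2/5]
/-- The fundamental weight `w₃ = (2,2,2,-3,-3)/5` of `A₄`. -/
def w3 : Fin 5 → ℚ := ![2/5, 2/5, 2/5, -3/5, -3/5]
/-- The fundamental weight `w₄ = (1,1,1,1,-4)/5` of `A₄`. -/
def w4 : Fin 5 → ℚ := ![1/5, 1/5, 1/5, 1/5, -4/5]

/-- The weight lattice `A₄^∨ = ℤw₁ + ℤw₂ + ℤw₃ + ℤw₄`.  The rescaled lattice `A₄^∨(5)`
is this group equipped with the bilinear form `5⟨·,·⟩`. -/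
def A4dual : AddSubgroup (Fin 5 → ℚ) := AddSubgroup.closure {w1, w2, w3, w4}

/-- The dual lattice `(1/5)A₄ = {a/5 : a ∈ A₄}` of `A₄^∨(5)`. -/
def fifthA4 : AddSubgroup (Fin 5 → ℚ) :=
  A4.map (DistribMulAction.toAddMonoidHom (Fin 5 → ℚ) ((5 : ℚ)⁻¹))

/-- The hyperplane `V = {x ∈ ℚ^5 : x₁ + ⋯ + x₅ = 0}`. -/
def V0 : Submodule ℚ (Fin 5 → ℚ) where
  carrier := {x | ∑ i, x i = 0}
  zero_mem' := by simp
  add_mem' := by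
    intro a b ha hb
    simp only [Set.mem_setOf_eq] at *
    simp [Pi.add_apply, Finset.sum_add_distrib, ha, hb]
  smul_mem' := by
    intro c a ha
    simp only [Set.mem_setOf_eq] at *
    simp [Pi.smul_apply, ← Finset.mul_sum, ha]

/-- The discriminant group `D = ((1/5)A₄)/A₄^∨` of the lattice `A₄^∨(5)`. -/
abbrev Disc := fifthA4 ⧸ (A4dual.addSubgroupOf fifthA4)


/-- Auxiliary: integers with sum 0 and sum of squares 4 have entries in {-1,0,1}. -/
lemma key0 (n0 n1 n2 n3 n4 : ℤ) (hs : n0+n1+n2+n3+n4 = 0)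
    (hq : n0*n0+n1*n1+n2*n2+n3*n3+n4*n4 = 4) :
    n0 = -1 ∨ n0 = 0 ∨ n0 = 1 := by
  have h4 : n0*n0 ≤ 4 := by
    nlinarith [mul_self_nonneg n1, mul_self_nonneg n2, mul_self_nonneg n3, mul_self_nonneg n4]
  have hlb : -2 ≤ n0 := by nlinarith
  have hub : n0 ≤ 2 := by nlinarith
  interval_cases n0
  · exfalso
    have h1 : n1 = 0 := by nlinarith [mul_self_nonneg n2, mul_self_nonneg n3, mul_self_nonneg n4]
    have h2 : n2 = 0 := by nlinarith [mul_self_nonneg n1, mul_self_nonneg n3, mul_self_nonneg n4]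
    have h3 : n3 = 0 := by nlinarith [mul_self_nonneg n1, mul_self_nonneg n2, mul_self_nonneg n4]
    have h4' : n4 = 0 := by nlinarith [mul_self_nonneg n1, mul_self_nonneg n2, mul_self_nonneg n3]
    omega
  · omega
  · omega
  · omega
  · exfalso
    have h1 : n1 = 0 := by nlinarith [mul_self_nonneg n2, mul_self_nonneg n3, mul_self_nonneg n4]
    have h2 : n2 = 0 := by nlinarith [mul_self_nonneg n1, mul_self_nonneg n3, mul_self_nonneg n4]
    have h3 : n3 = 0 := by nlinarith [mul_self_nonneg n1, mul_self_nonneg n2, mul_self_nonneg n4]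
    have h4' : n4 = 0 := by nlinarith [mul_self_nonneg n1, mul_self_nonneg n2, mul_self_nonneg n3]
    omega

/-- Entries of a norm-4 vector in `A₄` lie in `{-1,0,1}`. -/
lemma entries_tri (a : Fin 5 → ℚ) (ha : a ∈ A4) (hn : form a a = 4) :
    ∀ i, a i = -1 ∨ a i = 0 ∨ a i = 1 := by
  obtain ⟨hint, hsum⟩ := ha
  choose n hni using hint
  have hs : n 0 + n 1 + n 2 + n 3 + n 4 = 0 := by
    have := hsum
    rw [Fin.sum_univ_five] at this
    rw [hni 0, hni 1, hni 2, hni 3, hni 4] at this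
    exact_mod_cast this
  have hq : n 0 * n 0 + n 1 * n 1 + n 2 * n 2 + n 3 * n 3 + n 4 * n 4 = 4 := by
    have := hn
    rw [form, Fin.sum_univ_five] at this
    rw [hni 0, hni 1, hni 2, hni 3, hni 4] at this
    exact_mod_cast this
  intro i
  have key : n i = -1 ∨ n i = 0 ∨ n i = 1 := by
    fin_cases i
    · exact key0 (n 0) (n 1) (n 2) (n 3) (n 4) hs hq
    · exact key0 (n 1) (n 0) (n 2) (n 3) (n 4) (by linarith) (by linarith)
    · exact key0 (n 2) (n 0) (n 1) (n 3) (n 4) (by linarith) (by linarith)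
    · exact key0 (n 3) (n 0) (n 1) (n 2) (n 4) (by linarith) (by linarith)
    · exact key0 (n 4) (n 0) (n 1) (n 2) (n 3) (by linarith) (by linarith)
  rw [hni i]
  rcases key with h | h | h <;> rw [h] <;> norm_num

/-- The subgroup of vectors whose coordinates pairwise differ by integers. -/
def Scong : AddSubgroup (Fin 5 → ℚ) where
  carrier := {x | ∀ i j, ∃ m : ℤ, x i - x j = (m : ℚ)}
  zero_mem' := fun _ _ => ⟨0, by simp⟩
  add_mem' := by
    rintro a b ha hb i j
    obtain ⟨m, hm⟩ := ha i j
    obtain ⟨n, hn⟩ := hb i j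
    exact ⟨m + n, by push_cast [Pi.add_apply]; linarith⟩
  neg_mem' := by
    rintro a ha i j
    obtain ⟨m, hm⟩ := ha i j
    exact ⟨-m, by push_cast [Pi.neg_apply]; linarith⟩

lemma A4dual_le_Scong : A4dual ≤ Scong := by
  rw [A4dual, AddSubgroup.closure_le]
  have key : ∀ q : ℚ, (q = 0 ∨ q = 1 ∨ q = -1) → ∃ m : ℤ, q = (m : ℚ) := by
    rintro q (rfl | rfl | rfl)
    exacts [⟨0, by norm_num⟩, ⟨1, by norm_num⟩, ⟨-1, by norm_num⟩]
  rintro w (rfl | rfl | rfl | rfl) <;>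
    · intro i j
      apply key
      fin_cases i <;> fin_cases j <;> norm_num [w1, w2, w3, w4]

/-- Part 1: distinct norm-4 vectors are inequivalent. -/
lemma part1 : ∀ a b : Fin 5 → ℚ, a ∈ A4 → b ∈ A4 → form a a = 4 → form b b = 4 →
    (5 : ℚ)⁻¹ • (a - b) ∈ A4dual → a = b := by
  intro a b ha hb hna hnb hmem
  have hta := entries_tri a ha hna
  have htb := entries_tri b hb hnb
  have hS := A4dual_le_Scong hmem
  have hbd : ∀ i : Fin 5, -2 ≤ a i - b i ∧ a i - b i ≤ 2 := by
    intro i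
    rcases hta i with h | h | h <;> rcases htb i with h' | h' | h' <;>
      rw [h, h'] <;> norm_num
  have hall : ∀ i j : Fin 5, a i - b i = a j - b j := by
    intro i j
    obtain ⟨m, hm⟩ := hS i j
    simp only [Pi.smul_apply, Pi.sub_apply, smul_eq_mul] at hm
    have hbi := hbd i
    have hbj := hbd j
    have h1 : (m : ℚ) < 1 := by linarith
    have h2 : (-1 : ℚ) < m := by linarith
    have hm1 : m < 1 := by exact_mod_cast h1
    have hm2 : -1 < m := by exact_mod_cast h2
    have hm0 : m = 0 := by omega
    rw [hm0] at hm
    push_cast at hm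
    linarith
  have hsa := ha.2
  have hsb := hb.2
  rw [Fin.sum_univ_five] at hsa hsb
  have h10 := hall 1 0
  have h20 := hall 2 0
  have h30 := hall 3 0
  have h40 := hall 4 0
  funext i
  have hi0 := hall i 0
  have h00 : a 0 - b 0 = 0 := by linarith
  linarith

/-- The parametrizing predicate over `Fin 5 → Fin 3`. -/
def Tpred (v : Fin 5 → Fin 3) : Prop :=
  (∑ i, ((v i : ℤ) - 1)) = 0 ∧ (∑ i, ((v i : ℤ) - 1) * ((v i : ℤ) - 1)) = 4

instance : DecidablePred Tpred := fun v => by unfold Tpred; infer_instance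

/-- The parametrization map. -/
def fmap (v : Fin 5 → Fin 3) : Fin 5 → ℚ := fun i => ((v i : ℤ) : ℚ) - 1

lemma fmap_inj : Function.Injective fmap := by
  intro v w h
  funext i
  have : ((v i : ℤ) : ℚ) - 1 = ((w i : ℤ) : ℚ) - 1 := congrFun h i
  have h2 : ((v i : ℤ) : ℚ) = ((w i : ℤ) : ℚ) := by linarith
  have h3 : (v i : ℤ) = (w i : ℤ) := by exact_mod_cast h2
  omega

lemma set_eq : {a : Fin 5 → ℚ | a ∈ A4 ∧ form a a = 4} = fmap '' {v | Tpred v} := by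
  ext a
  constructor
  · rintro ⟨ha, hn⟩
    have htri := entries_tri a ha hn
    set v : Fin 5 → Fin 3 := fun i => if a i = -1 then 0 else if a i = 0 then 1 else 2 with hv
    have hfv : fmap v = a := by
      funext i
      rcases htri i with h | h | h <;> norm_num [fmap, hv, h]
    refine ⟨v, ⟨?_, ?_⟩, hfv⟩
    · have hc : ((∑ i, ((v i : ℤ) - 1) : ℤ) : ℚ) = ∑ i, fmap v i := by
        push_cast [fmap]
        rfl
      rw [hfv, ha.2] at hc
      exact_mod_cast hc
    · have hc : ((∑ i, ((v i : ℤ) - 1) * ((v i : ℤ) - 1) : ℤ) : ℚ)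
          = ∑ i, fmap v i * fmap v i := by
        push_cast [fmap]
        rfl
      rw [hfv, ← form, hn] at hc
      exact_mod_cast hc
  · rintro ⟨v, ⟨hv1, hv2⟩, rfl⟩
    refine ⟨⟨fun i => ⟨(v i : ℤ) - 1, by push_cast [fmap]; ring⟩, ?_⟩, ?_⟩
    · have : ((∑ i, ((v i : ℤ) - 1) : ℤ) : ℚ) = ∑ i, fmap v i := by
        push_cast [fmap]
        rfl
      rw [hv1] at this
      exact this.symm.trans (by norm_num)
    · have : ((∑ i, ((v i : ℤ) - 1) * ((v i : ℤ) - 1) : ℤ) : ℚ) = ∑ i, fmap v i * fmap v i := by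
        push_cast [fmap]
        rfl
      rw [hv2] at this
      rw [form]
      rw [← this]
      norm_num

lemma count30 : Set.ncard {a : Fin 5 → ℚ | a ∈ A4 ∧ form a a = 4} = 30 := by
  rw [set_eq, Set.ncard_image_of_injective _ fmap_inj]
  have h1 : {v | Tpred v} = ↑(Finset.univ.filter Tpred) := by
    ext v; simp
  rw [h1, Set.ncard_coe_finset]
  decide

/-- Distinct vectors of norm `4/5` in the dual lattice of `A₄^∨(5)`
are inequivalent modulo `A₄^∨`, and the vectors `a/5` with `a ∈ A₄`, `⟨a,a⟩ = 4`
represent exactly `30` distinct classes in the discriminant group. -/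
theorem norm_four_fifths_classes :
    (∀ a b : Fin 5 → ℚ, a ∈ A4 → b ∈ A4 → form a a = 4 → form b b = 4 →
      (5 : ℚ)⁻¹ • (a - b) ∈ A4dual → a = b) ∧
    Set.ncard ((fun a : Fin 5 → ℚ =>
        (QuotientAddGroup.mk ((5 : ℚ)⁻¹ • a) : (Fin 5 → ℚ) ⧸ A4dual)) ''
      {a | a ∈ A4 ∧ form a a = 4}) = 30 := by
  constructor
  · exact part1
  · have hinj : Set.InjOn (fun a : Fin 5 → ℚ =>
        (QuotientAddGroup.mk ((5 : ℚ)⁻¹ • a) : (Fin 5 → ℚ) ⧸ A4dual))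
        {a | a ∈ A4 ∧ form a a = 4} := by
      rintro a ⟨ha, hna⟩ b ⟨hb, hnb⟩ hab
      have h := (QuotientAddGroup.eq).mp hab
      have h2 : (5 : ℚ)⁻¹ • (a - b) ∈ A4dual := by
        have : (5 : ℚ)⁻¹ • (a - b) = -(-((5 : ℚ)⁻¹ • a) + (5 : ℚ)⁻¹ • b) := by
          rw [smul_sub]; abel
        rw [this]
        exact neg_mem h
      exact part1 a b ha hb hna hnb h2
    rw [Set.ncard_image_of_injOn hinj]
    exact count30
end
end

section
/- The vectors of norm 2 in the dual lattice of A_4^∨(5) fall into exactly 24 classes modulo A_4^∨, each class containing exactly 5 such vectors: for every a ∈ A_4 with ⟨a,a⟩ = 10, the set {b ∈ A_4 : ⟨b,b⟩ = 10 and (a − b)/5 ∈ A_4^∨} has exactly 5 elements, and the image of {a ∈ A_4 : ⟨a,a⟩ = 10} in D under a ↦ a/5 + A_4^∨ has exactly 24 elements. -/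
open scoped BigOperators

noncomputable section

-- ===== auxiliary development =====
set_option maxRecDepth 40000
set_option maxHeartbeats 4000000

/-- The 120 integer vectors of sum `0` and norm `10`. -/
def Zlist : List (Fin 5 → ℤ) := [![-2,-1,0,1,2], ![-2,-1,0,2,1], ![-2,-1,1,0,2], ![-2,-1,1,2,0], ![-2,-1,2,0,1], ![-2,-1,2,1,0], ![-2,0,-1,1,2], ![-2,0,-1,2,1], ![-2,0,1,-1,2], ![-2,0,1,2,-1], ![-2,0,2,-1,1], ![-2,0,2,1,-1], ![-2,1,-1,0,2], ![-2,1,-1,2,0], ![-2,1,0,-1,2], ![-2,1,0,2,-1], ![-2,1,2,-1,0], ![-2,1,2,0,-1], ![-2,2,-1,0,1], ![-2,2,-1,1,0], ![-2,2,0,-1,1], ![-2,2,0,1,-1], ![-2,2,1,-1,0], ![-2,2,1,0,-1], ![-1,-2,0,1,2], ![-1,-2,0,2,1], ![-1,-2,1,0,2], ![-1,-2,1,2,0], ![-1,-2,2,0,1], ![-1,-2,2,1,0], ![-1,0,-2,1,2], ![-1,0,-2,2,1], ![-1,0,1,-2,2], ![-1,0,1,2,-2], ![-1,0,2,-2,1],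 ![-1,0,2,1,-2], ![-1,1,-2,0,2], ![-1,1,-2,2,0], ![-1,1,0,-2,2], ![-1,1,0,2,-2], ![-1,1,2,-2,0], ![-1,1,2,0,-2], ![-1,2,-2,0,1], ![-1,2,-2,1,0], ![-1,2,0,-2,1], ![-1,2,0,1,-2], ![-1,2,1,-2,0], ![-1,2,1,0,-2], ![0,-2,-1,1,2], ![0,-2,-1,2,1], ![0,-2,1,-1,2], ![0,-2,1,2,-1], ![0,-2,2,-1,1], ![0,-2,2,1,-1], ![0,-1,-2,1,2], ![0,-1,-2,2,1], ![0,-1,1,-2,2], ![0,-1,1,2,-2], ![0,-1,2,-2,1], ![0,-1,2,1,-2], ![0,1,-2,-1,2], ![0,1,-2,2,-1], ![0,1,-1,-2,2], ![0,1,-1,2,-2], ![0,1,2,-2,-1], ![0,1,2,-1,-2], ![0,2,-2,-1,1], ![0,2,-2,1,-1], ![0,2,-1,-2,1], ![0,2,-1,1,-2], ![0,2,1,-2,-1], ![0,2,1,-1,-2], ![1,-2,-1,0,2], ![1,-2,-1,2,0], ![1,-2,0,-1,2], ![1,-2,0,2,-1], ![1,-2,2,-1,0], ![1,-2,2,0,-1],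 ![1,-1,-2,0,2], ![1,-1,-2,2,0], ![1,-1,0,-2,2], ![1,-1,0,2,-2], ![1,-1,2,-2,0], ![1,-1,2,0,-2], ![1,0,-2,-1,2], ![1,0,-2,2,-1], ![1,0,-1,-2,2], ![1,0,-1,2,-2], ![1,0,2,-2,-1], ![1,0,2,-1,-2], ![1,2,-2,-1,0], ![1,2,-2,0,-1], ![1,2,-1,-2,0], ![1,2,-1,0,-2], ![1,2,0,-2,-1], ![1,2,0,-1,-2], ![2,-2,-1,0,1], ![2,-2,-1,1,0], ![2,-2,0,-1,1], ![2,-2,0,1,-1], ![2,-2,1,-1,0], ![2,-2,1,0,-1], ![2,-1,-2,0,1], ![2,-1,-2,1,0], ![2,-1,0,-2,1], ![2,-1,0,1,-2], ![2,-1,1,-2,0], ![2,-1,1,0,-2], ![2,0,-2,-1,1], ![2,0,-2,1,-1], ![2,0,-1,-2,1], ![2,0,-1,1,-2], ![2,0,1,-2,-1], ![2,0,1,-1,-2], ![2,1,-2,-1,0], ![2,1,-2,0,-1], ![2,1,-1,-2,0], ![2,1,-1,0,-2], ![2,1,0,-2,-1], ![2,1,0,-1,-2]]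

def Zset : Finset (Fin 5 → ℤ) := ⟨↑Zlist, by decide⟩

def relZ (n m : Fin 5 → ℤ) : Prop := ∀ i, (n i - m i - n 0 + m 0) % 5 = 0

instance (n : Fin 5 → ℤ) : DecidablePred (relZ n) := fun m =>
  inferInstanceAs (Decidable (∀ i, (n i - m i - n 0 + m 0) % 5 = 0))

def Rset : Finset (Fin 5 → ℤ) := Zset.filter (fun n => n 0 = 2)

theorem fact1 : ∀ n ∈ Zset, (Zset.filter (relZ n)).card = 5 := by decide
theorem fact2 : Rset.card = 24 := by decide
theorem fact3 : ∀ n ∈ Zset, ∃ r ∈ Rset, relZ n r := by decide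
theorem fact4 : ∀ r ∈ Rset, ∀ s ∈ Rset, relZ r s → r = s := by decide
theorem fact5 : ∀ n ∈ Zset, (∑ i, n i = 0 ∧ ∑ i, n i * n i = 10) := by decide
theorem fact6 : ∀ a ∈ Finset.Icc (-3:ℤ) 3, ∀ b ∈ Finset.Icc (-3:ℤ) 3, ∀ c ∈ Finset.Icc (-3:ℤ) 3,
    ∀ d ∈ Finset.Icc (-3:ℤ) 3, ∀ e ∈ Finset.Icc (-3:ℤ) 3,
    a + b + c + d + e = 0 → a*a + b*b + c*c + d*d + e*e = 10 →
    ![a,b,c,d,e] ∈ Zset := by decide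

def ι (n : Fin 5 → ℤ) : Fin 5 → ℚ := fun i => (n i : ℚ)

theorem ι_inj : Function.Injective ι := fun n m h => funext fun i => by
  have := congrFun h i; simp only [ι] at this; exact_mod_cast this

theorem relZ_symm {n m : Fin 5 → ℤ} (h : relZ n m) : relZ m n := fun i => by
  have := h i; omega

theorem hw1 : w1 ∈ A4dual := AddSubgroup.subset_closure (Set.mem_insert _ _)
theorem hw2 : w2 ∈ A4dual :=
  AddSubgroup.subset_closure (Set.mem_insert_of_mem _ (Set.mem_insert _ _))
theorem hw3 : w3 ∈ A4dual :=
  AddSubgroup.subset_closure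
    (Set.mem_insert_of_mem _ (Set.mem_insert_of_mem _ (Set.mem_insert _ _)))
theorem hw4 : w4 ∈ A4dual :=
  AddSubgroup.subset_closure
    (Set.mem_insert_of_mem _ (Set.mem_insert_of_mem _ (Set.mem_insert_of_mem _ rfl)))

theorem hr0 : (![1,-1,0,0,0] : Fin 5 → ℚ) ∈ A4dual := by
  have h : (![1,-1,0,0,0] : Fin 5 → ℚ) = w1 + w1 - w2 := by
    funext i; fin_cases i <;> norm_num [w1, w2]
  rw [h]; exact sub_mem (add_mem hw1 hw1) hw2
theorem hr1 : (![0,1,-1,0,0] : Fin 5 → ℚ) ∈ A4dual := by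
  have h : (![0,1,-1,0,0] : Fin 5 → ℚ) = w2 + w2 - w1 - w3 := by
    funext i; fin_cases i <;> norm_num [w1, w2, w3]
  rw [h]; exact sub_mem (sub_mem (add_mem hw2 hw2) hw1) hw3
theorem hr2 : (![0,0,1,-1,0] : Fin 5 → ℚ) ∈ A4dual := by
  have h : (![0,0,1,-1,0] : Fin 5 → ℚ) = w3 + w3 - w2 - w4 := by
    funext i; fin_cases i <;> norm_num [w2, w3, w4]
  rw [h]; exact sub_mem (sub_mem (add_mem hw3 hw3) hw2) hw4
theorem hr3 : (![0,0,0,1,-1] : Fin 5 → ℚ) ∈ A4dual := by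
  have h : (![0,0,0,1,-1] : Fin 5 → ℚ) = w4 + w4 - w3 := by
    funext i; fin_cases i <;> norm_num [w3, w4]
  rw [h]; exact sub_mem (add_mem hw4 hw4) hw3

theorem intvec_mem (k : Fin 5 → ℤ) (hk : k 0 + k 1 + k 2 + k 3 + k 4 = 0) :
    ι k ∈ A4dual := by
  have h : ι k = (k 0) • (![1,-1,0,0,0] : Fin 5 → ℚ) + (k 0 + k 1) • (![0,1,-1,0,0] : Fin 5 → ℚ)
      + (k 0 + k 1 + k 2) • (![0,0,1,-1,0] : Fin 5 → ℚ)
      + (k 0 + k 1 + k 2 + k 3) • (![0,0,0,1,-1] : Fin 5 → ℚ) := by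
    have hk' : (k 0 : ℚ) + k 1 + k 2 + k 3 + k 4 = 0 := by exact_mod_cast congrArg (Int.cast : ℤ → ℚ) hk
    funext i; fin_cases i <;>
      simp [ι, Matrix.cons_val_zero, Matrix.cons_val_one] <;> push_cast <;> linarith
  rw [h]
  exact add_mem (add_mem (add_mem (AddSubgroup.zsmul_mem _ hr0 _) (AddSubgroup.zsmul_mem _ hr1 _))
    (AddSubgroup.zsmul_mem _ hr2 _)) (AddSubgroup.zsmul_mem _ hr3 _)

/-- The characterization of the weight lattice. -/
def Qgrp : AddSubgroup (Fin 5 → ℚ) where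
  carrier := {x | (∑ i, x i = 0) ∧ (∃ m : ℤ, 5 * x 0 = (m : ℚ)) ∧
    (∀ i, ∃ n : ℤ, x i - x 0 = (n : ℚ))}
  zero_mem' := ⟨by simp, ⟨0, by simp⟩, fun i => ⟨0, by simp⟩⟩
  add_mem' := by
    rintro a b ⟨ha0, ⟨ma, hma⟩, hna⟩ ⟨hb0, ⟨mb, hmb⟩, hnb⟩
    refine ⟨by simp [Pi.add_apply, Finset.sum_add_distrib, ha0, hb0], ⟨ma + mb, ?_⟩, fun i => ?_⟩
    · push_cast; simp only [Pi.add_apply]; linarith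
    · obtain ⟨x, hx⟩ := hna i; obtain ⟨y, hy⟩ := hnb i
      exact ⟨x + y, by push_cast; simp only [Pi.add_apply]; linarith⟩
  neg_mem' := by
    rintro a ⟨ha0, ⟨ma, hma⟩, hna⟩
    refine ⟨by simp [Pi.neg_apply, Finset.sum_neg_distrib, ha0], ⟨-ma, ?_⟩, fun i => ?_⟩
    · push_cast; simp only [Pi.neg_apply]; linarith
    · obtain ⟨x, hx⟩ := hna i
      exact ⟨-x, by push_cast; simp only [Pi.neg_apply]; linarith⟩

theorem mem_A4dual_iff (x : Fin 5 → ℚ) :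
    x ∈ A4dual ↔ (∑ i, x i = 0) ∧ (∃ m : ℤ, 5 * x 0 = (m : ℚ)) ∧
      (∀ i, ∃ n : ℤ, x i - x 0 = (n : ℚ)) := by
  constructor
  · intro hx
    have hle : A4dual ≤ Qgrp := by
      rw [A4dual, AddSubgroup.closure_le]
      rintro y (rfl | rfl | rfl | rfl) <;>
        refine ⟨by simp [Fin.sum_univ_five, w1, w2, w3, w4] <;> norm_num, ⟨?_, ?_⟩, fun i => ?_⟩
      · exact 4
      · norm_num [w1]
      · fin_cases i
        exacts [⟨0, by norm_num [w1]⟩, ⟨-1, by norm_num [w1]⟩, ⟨-1, by norm_num [w1]⟩,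
          ⟨-1, by norm_num [w1]⟩, ⟨-1, by norm_num [w1]⟩]
      · exact 3
      · norm_num [w2]
      · fin_cases i
        exacts [⟨0, by norm_num [w2]⟩, ⟨0, by norm_num [w2]⟩, ⟨-1, by norm_num [w2]⟩,
          ⟨-1, by norm_num [w2]⟩, ⟨-1, by norm_num [w2]⟩]
      · exact 2
      · norm_num [w3]
      · fin_cases i
        exacts [⟨0, by norm_num [w3]⟩, ⟨0, by norm_num [w3]⟩, ⟨0, by norm_num [w3]⟩,
          ⟨-1, by norm_num [w3]⟩, ⟨-1, by norm_num [w3]⟩]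
      · exact 1
      · norm_num [w4]
      · fin_cases i
        exacts [⟨0, by norm_num [w4]⟩, ⟨0, by norm_num [w4]⟩, ⟨0, by norm_num [w4]⟩,
          ⟨0, by norm_num [w4]⟩, ⟨-1, by norm_num [w4]⟩]
    exact hle hx
  · rintro ⟨hsum, ⟨m, hm⟩, hn⟩
    choose k hk using hn
    have h0 := hk 0; have h1 := hk 1; have h2 := hk 2; have h3 := hk 3; have h4 := hk 4
    have hsum' : (m : ℚ) + (k 0 + k 1 + k 2 + k 3 + k 4) = 0 := by
      rw [Fin.sum_univ_five] at hsum; linarith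
    set k' : Fin 5 → ℤ := ![k 0, k 1, k 2, k 3, k 4 + m] with hk'
    have hx : x = (m : ℤ) • w4 + ι k' := by
      funext i; fin_cases i <;>
        simp [w4, ι, hk', zsmul_eq_mul] <;> push_cast <;> linarith
    have hsk : k' 0 + k' 1 + k' 2 + k' 3 + k' 4 = 0 := by
      have : (↑(k 0 + k 1 + k 2 + k 3 + (k 4 + m)) : ℚ) = 0 := by push_cast; linarith
      have := Int.cast_injective (α := ℚ) (by push_cast at this ⊢; exact_mod_cast this)
      simp [hk']; omega
    rw [hx]
    exact add_mem (AddSubgroup.zsmul_mem _ hw4 _) (intvec_mem k' hsk)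

theorem S10_iff (a : Fin 5 → ℚ) :
    (a ∈ A4 ∧ form a a = 10) ↔ ∃ n ∈ Zset, a = ι n := by
  constructor
  · rintro ⟨⟨hint, hsum⟩, hform⟩
    choose k hk using hint
    have hksum : k 0 + k 1 + k 2 + k 3 + k 4 = 0 := by
      rw [Fin.sum_univ_five, hk 0, hk 1, hk 2, hk 3, hk 4] at hsum
      exact_mod_cast hsum
    have hkform : k 0 * k 0 + k 1 * k 1 + k 2 * k 2 + k 3 * k 3 + k 4 * k 4 = 10 := by
      rw [form, Fin.sum_univ_five, hk 0, hk 1, hk 2, hk 3, hk 4] at hform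
      exact_mod_cast hform
    have hkform' : ∑ j, k j * k j = 10 := by rw [Fin.sum_univ_five]; exact hkform
    have hb : ∀ i, k i ∈ Finset.Icc (-3 : ℤ) 3 := by
      intro i
      have hle := Finset.single_le_sum (f := fun j => k j * k j)
        (fun j _ => mul_self_nonneg (k j)) (Finset.mem_univ i)
      rw [hkform'] at hle
      rw [Finset.mem_Icc]
      constructor <;> nlinarith [hle]
    refine ⟨![k 0, k 1, k 2, k 3, k 4],
      fact6 _ (hb 0) _ (hb 1) _ (hb 2) _ (hb 3) _ (hb 4) hksum hkform, ?_⟩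
    funext i; fin_cases i <;> simp [ι, hk 0, hk 1, hk 2, hk 3, hk 4]
  · rintro ⟨n, hn, rfl⟩
    obtain ⟨hs, hf⟩ := fact5 n hn
    refine ⟨⟨fun i => ⟨n i, rfl⟩, ?_⟩, ?_⟩
    · simp only [ι]; exact_mod_cast hs
    · rw [form]; simp only [ι]; exact_mod_cast hf

theorem transfer (n m : Fin 5 → ℤ) (hn : ∑ i, n i = 0) (hm : ∑ i, m i = 0) :
    (5 : ℚ)⁻¹ • (ι n - ι m) ∈ A4dual ↔ relZ n m := by
  rw [mem_A4dual_iff]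
  have happ : ∀ i, ((5 : ℚ)⁻¹ • (ι n - ι m)) i = 5⁻¹ * ((n i : ℚ) - m i) := by
    intro i; simp [ι, Pi.smul_apply, smul_eq_mul]
  constructor
  · rintro ⟨-, -, h⟩ i
    obtain ⟨c, hc⟩ := h i
    rw [happ i, happ 0] at hc
    have h5 : ((n i - m i - n 0 + m 0 : ℤ) : ℚ) = ((5 * c : ℤ) : ℚ) := by push_cast; linarith
    have : n i - m i - n 0 + m 0 = 5 * c := Int.cast_injective h5
    omega
  · intro h
    refine ⟨?_, ⟨n 0 - m 0, by rw [happ 0]; push_cast; ring⟩, fun i => ?_⟩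
    · rw [Fin.sum_univ_five] at hn hm ⊢
      rw [happ 0, happ 1, happ 2, happ 3, happ 4]
      have hn' : (n 0 : ℚ) + n 1 + n 2 + n 3 + n 4 = 0 := by exact_mod_cast hn
      have hm' : (m 0 : ℚ) + m 1 + m 2 + m 3 + m 4 = 0 := by exact_mod_cast hm
      linarith
    · have := h i
      obtain ⟨c, hc⟩ : (5 : ℤ) ∣ (n i - m i - n 0 + m 0) := by omega
      refine ⟨c, ?_⟩
      rw [happ i, happ 0]
      have : ((n i : ℚ) - m i - n 0 + m 0) = 5 * c := by exact_mod_cast congrArg (Int.cast : ℤ → ℚ) hc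
      linarith

theorem mk_eq_mk_iff (x y : Fin 5 → ℚ) :
    (QuotientAddGroup.mk x : (Fin 5 → ℚ) ⧸ A4dual) = QuotientAddGroup.mk y ↔
      x - y ∈ A4dual := by
  rw [QuotientAddGroup.eq, neg_add_eq_sub, ← neg_sub x y, neg_mem_iff]
/-- The vectors of norm `2` in the dual lattice of `A₄^∨(5)` fall
into exactly `24` classes modulo `A₄^∨`, each class containing exactly `5` such
vectors. -/
theorem norm_two_classes :
    (∀ a : Fin 5 → ℚ, a ∈ A4 → form a a = 10 →
      Set.ncard {b : Fin 5 → ℚ | b ∈ A4 ∧ form b b = 10 ∧ (5 : ℚ)⁻¹ • (a - b) ∈ A4dual} = 5) ∧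
    Set.ncard ((fun a : Fin 5 → ℚ =>
        (QuotientAddGroup.mk ((5 : ℚ)⁻¹ • a) : (Fin 5 → ℚ) ⧸ A4dual)) ''
      {a | a ∈ A4 ∧ form a a = 10}) = 24 := by
  constructor
  · intro a ha hfa
    obtain ⟨n, hnZ, rfl⟩ := (S10_iff a).mp ⟨ha, hfa⟩
    have hset : {b : Fin 5 → ℚ | b ∈ A4 ∧ form b b = 10 ∧ (5 : ℚ)⁻¹ • (ι n - b) ∈ A4dual}
        = ↑((Zset.filter (relZ n)).image ι) := by
      ext b
      simp only [Set.mem_setOf_eq, Finset.coe_image, Set.mem_image, Finset.mem_coe,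
        Finset.mem_filter]
      constructor
      · rintro ⟨hb4, hbf, hrel⟩
        obtain ⟨m, hmZ, rfl⟩ := (S10_iff b).mp ⟨hb4, hbf⟩
        exact ⟨m, ⟨hmZ, (transfer n m (fact5 n hnZ).1 (fact5 m hmZ).1).mp hrel⟩, rfl⟩
      · rintro ⟨m, ⟨hmZ, hrel⟩, rfl⟩
        obtain ⟨hb4, hbf⟩ := (S10_iff (ι m)).mpr ⟨m, hmZ, rfl⟩
        exact ⟨hb4, hbf, (transfer n m (fact5 n hnZ).1 (fact5 m hmZ).1).mpr hrel⟩
    rw [hset, Set.ncard_coe_finset, Finset.card_image_of_injective _ ι_inj]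
    exact fact1 n hnZ
  · set F : (Fin 5 → ℚ) → (Fin 5 → ℚ) ⧸ A4dual :=
      fun a => (QuotientAddGroup.mk ((5 : ℚ)⁻¹ • a) : (Fin 5 → ℚ) ⧸ A4dual) with hF
    have hFeq : ∀ n m : Fin 5 → ℤ, n ∈ Zset → m ∈ Zset → (F (ι n) = F (ι m) ↔ relZ n m) := by
      intro n m hn hm
      rw [hF]
      simp only
      rw [mk_eq_mk_iff, ← smul_sub]
      exact transfer n m (fact5 n hn).1 (fact5 m hm).1
    have hRZ : ∀ r, r ∈ Rset → r ∈ Zset := fun r hr => (Finset.mem_filter.mp hr).1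
    have himg : (fun a : Fin 5 → ℚ =>
          (QuotientAddGroup.mk ((5 : ℚ)⁻¹ • a) : (Fin 5 → ℚ) ⧸ A4dual)) ''
        {a | a ∈ A4 ∧ form a a = 10} = (F ∘ ι) '' ↑Rset := by
      ext q
      constructor
      · rintro ⟨a, ha, rfl⟩
        obtain ⟨n, hnZ, rfl⟩ := (S10_iff a).mp ha
        obtain ⟨r, hrR, hrel⟩ := fact3 n hnZ
        refine ⟨r, hrR, ?_⟩
        show F (ι r) = F (ι n)
        exact (hFeq r n (hRZ r hrR) hnZ).mpr (relZ_symm hrel)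
      · rintro ⟨r, hrR, rfl⟩
        exact ⟨ι r, (S10_iff (ι r)).mpr ⟨r, hRZ r hrR, rfl⟩, rfl⟩
    rw [himg]
    rw [Set.ncard_image_of_injOn, Set.ncard_coe_finset, fact2]
    intro r hr s hs hFr
    exact fact4 r hr s hs ((hFeq r s (hRZ r hr) (hRZ s hs)).mp hFr)
end
end
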